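/- Anick's automorphism ζ of k[y₁,y₂,y₃,y₄], given by y₁ ↦ y₁, y₂ ↦ y₂ + y₁Δ, y₃ ↦ y₃, y₄ ↦ y₄ + y₃Δ where Δ = y₁y₄ - y₂y₃, restricts to an automorphism of the subalgebra k[y₁y₃, y₁y₄, y₂y₃, y₂y₄] ⊆ k[y₁,y₂,y₃,y₄] (the degree-zero component of the grading with deg y₁ = deg y₂ = 1, deg y₃ = deg y₄ = -1). -/

import Mathlib

open MvPolynomial

section Aux
variable (k : Type*) [Field k] [CharZero k]

noncomputable def anickZeta : MvPolynomial (Fin 4) k →ₐ[k] MvPolynomial (Fin 4) k :=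
  aeval ![X 0, X 1 + X 0 * (X 0 * X 3 - X 1 * X 2), X 2,
      X 3 + X 2 * (X 0 * X 3 - X 1 * X 2)]

noncomputable def anickZetaInv : MvPolynomial (Fin 4) k →ₐ[k] MvPolynomial (Fin 4) k :=
  aeval ![X 0, X 1 - X 0 * (X 0 * X 3 - X 1 * X 2), X 2,
      X 3 - X 2 * (X 0 * X 3 - X 1 * X 2)]

lemma anick_comp₁ : (anickZeta k).comp (anickZetaInv k) = AlgHom.id k _ := by
  ext i
  fin_cases i <;>
    simp [anickZeta, anickZetaInv, Matrix.cons_val_zero, Matrix.cons_val_one] <;> ring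

lemma anick_comp₂ : (anickZetaInv k).comp (anickZeta k) = AlgHom.id k _ := by
  ext i
  fin_cases i <;>
    simp [anickZeta, anickZetaInv, Matrix.cons_val_zero, Matrix.cons_val_one] <;> ring

noncomputable def anickEquiv : MvPolynomial (Fin 4) k ≃ₐ[k] MvPolynomial (Fin 4) k :=
  AlgEquiv.ofAlgHom (anickZeta k) (anickZetaInv k) (anick_comp₁ k) (anick_comp₂ k)

noncomputable def coneSet : Set (MvPolynomial (Fin 4) k) :=
  {X 0 * X 2, X 0 * X 3, X 1 * X 2, X 1 * X 3}

lemma mem_cone₁ : (X 0 * X 2 : MvPolynomial (Fin 4) k) ∈ Algebra.adjoin k (coneSet k) :=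
  Algebra.subset_adjoin (by simp [coneSet])
lemma mem_cone₂ : (X 0 * X 3 : MvPolynomial (Fin 4) k) ∈ Algebra.adjoin k (coneSet k) :=
  Algebra.subset_adjoin (by simp [coneSet])
lemma mem_cone₃ : (X 1 * X 2 : MvPolynomial (Fin 4) k) ∈ Algebra.adjoin k (coneSet k) :=
  Algebra.subset_adjoin (by simp [coneSet])
lemma mem_cone₄ : (X 1 * X 3 : MvPolynomial (Fin 4) k) ∈ Algebra.adjoin k (coneSet k) :=
  Algebra.subset_adjoin (by simp [coneSet])

lemma anick_map_le : (Algebra.adjoin k (coneSet k)).map (anickZeta k) ≤ Algebra.adjoin k (coneSet k) := by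
  rw [AlgHom.map_adjoin]
  apply Algebra.adjoin_le
  rintro p ⟨q, hq, rfl⟩
  have h1 := mem_cone₁ k; have h2 := mem_cone₂ k; have h3 := mem_cone₃ k; have h4 := mem_cone₄ k
  set S := Algebra.adjoin k (coneSet k)
  rcases hq with rfl | rfl | rfl | rfl
  · have : anickZeta k (X 0 * X 2) = X 0 * X 2 := by simp [anickZeta]
    rw [this]; exact h1
  · have : anickZeta k (X 0 * X 3) =
        X 0 * X 3 + (X 0 * X 2) * (X 0 * X 3 - X 1 * X 2) := by simp [anickZeta]; ring
    rw [this]; exact S.add_mem h2 (S.mul_mem h1 (S.sub_mem h2 h3))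
  · have : anickZeta k (X 1 * X 2) =
        X 1 * X 2 + (X 0 * X 2) * (X 0 * X 3 - X 1 * X 2) := by simp [anickZeta]; ring
    rw [this]; exact S.add_mem h3 (S.mul_mem h1 (S.sub_mem h2 h3))
  · have : anickZeta k (X 1 * X 3) =
        X 1 * X 3 + (X 0 * X 3 + X 1 * X 2) * (X 0 * X 3 - X 1 * X 2)
          + (X 0 * X 2) * (X 0 * X 3 - X 1 * X 2) ^ 2 := by simp [anickZeta]; ring
    rw [this]
    exact S.add_mem (S.add_mem h4 (S.mul_mem (S.add_mem h2 h3) (S.sub_mem h2 h3)))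
      (S.mul_mem h1 (S.pow_mem (S.sub_mem h2 h3) 2))

lemma anickInv_map_le : (Algebra.adjoin k (coneSet k)).map (anickZetaInv k) ≤ Algebra.adjoin k (coneSet k) := by
  rw [AlgHom.map_adjoin]
  apply Algebra.adjoin_le
  rintro p ⟨q, hq, rfl⟩
  have h1 := mem_cone₁ k; have h2 := mem_cone₂ k; have h3 := mem_cone₃ k; have h4 := mem_cone₄ k
  set S := Algebra.adjoin k (coneSet k)
  rcases hq with rfl | rfl | rfl | rfl
  · have : anickZetaInv k (X 0 * X 2) = X 0 * X 2 := by simp [anickZetaInv]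
    rw [this]; exact h1
  · have : anickZetaInv k (X 0 * X 3) =
        X 0 * X 3 - (X 0 * X 2) * (X 0 * X 3 - X 1 * X 2) := by simp [anickZetaInv]; ring
    rw [this]; exact S.sub_mem h2 (S.mul_mem h1 (S.sub_mem h2 h3))
  · have : anickZetaInv k (X 1 * X 2) =
        X 1 * X 2 - (X 0 * X 2) * (X 0 * X 3 - X 1 * X 2) := by simp [anickZetaInv]; ring
    rw [this]; exact S.sub_mem h3 (S.mul_mem h1 (S.sub_mem h2 h3))
  · have : anickZetaInv k (X 1 * X 3) =
        X 1 * X 3 - (X 0 * X 3 + X 1 * X 2) * (X 0 * X 3 - X 1 * X 2)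
          + (X 0 * X 2) * (X 0 * X 3 - X 1 * X 2) ^ 2 := by simp [anickZetaInv]; ring
    rw [this]
    exact S.add_mem (S.sub_mem h4 (S.mul_mem (S.add_mem h2 h3) (S.sub_mem h2 h3)))
      (S.mul_mem h1 (S.pow_mem (S.sub_mem h2 h3) 2))

lemma anick_map_eq : (Algebra.adjoin k (coneSet k)).map (anickZeta k) = Algebra.adjoin k (coneSet k) := by
  refine le_antisymm (anick_map_le k) ?_
  intro x hx
  refine ⟨anickZetaInv k x, anickInv_map_le k ⟨x, hx, rfl⟩, ?_⟩
  have := congrArg (fun f => f x) (anick_comp₁ k)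
  simpa using this

end Aux

theorem anick_restricts_to_cone_subalgebra (k : Type*) [Field k] [CharZero k] :
    Subalgebra.map
      (aeval ![X 0, X 1 + X 0 * (X 0 * X 3 - X 1 * X 2), X 2,
          X 3 + X 2 * (X 0 * X 3 - X 1 * X 2)] :
        MvPolynomial (Fin 4) k →ₐ[k] MvPolynomial (Fin 4) k)
      (Algebra.adjoin k
        ({X 0 * X 2, X 0 * X 3, X 1 * X 2, X 1 * X 3} : Set (MvPolynomial (Fin 4) k))) =
    Algebra.adjoin k
      ({X 0 * X 2, X 0 * X 3, X 1 * X 2, X 1 * X 3} : Set (MvPolynomial (Fin 4) k)) ∧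
    ∃ e : (Algebra.adjoin k
        ({X 0 * X 2, X 0 * X 3, X 1 * X 2, X 1 * X 3} : Set (MvPolynomial (Fin 4) k))) ≃ₐ[k]
        (Algebra.adjoin k
        ({X 0 * X 2, X 0 * X 3, X 1 * X 2, X 1 * X 3} : Set (MvPolynomial (Fin 4) k))),
      ∀ a, (e a : MvPolynomial (Fin 4) k) =
        (aeval ![X 0, X 1 + X 0 * (X 0 * X 3 - X 1 * X 2), X 2,
          X 3 + X 2 * (X 0 * X 3 - X 1 * X 2)] :
          MvPolynomial (Fin 4) k →ₐ[k] MvPolynomial (Fin 4) k) (a : MvPolynomial (Fin 4) k) := by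
  have hmap : (Algebra.adjoin k (coneSet k)).map (anickZeta k) = Algebra.adjoin k (coneSet k) :=
    anick_map_eq k
  have hinj : Function.Injective (anickZeta k) := (anickEquiv k).injective
  refine ⟨hmap, ?_⟩
  refine ⟨(Subalgebra.equivMapOfInjective _ (anickZeta k) hinj).trans
    (Subalgebra.equivOfEq _ _ hmap), fun a => ?_⟩
  simp [Subalgebra.equivMapOfInjective, anickZeta]
  rfl
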